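/- Suppose g is strictly increasing and bounded on [0,∞). Then for any Borel measure μ on ℝⁿ with 0 < μ(ℝⁿ) < ∞ there is at most one point x_c ∈ ℝⁿ with V(x_c) = 0. -/

import Mathlib

open MeasureTheory Filter Set Topology

/-- The radial vector field `v(y) = g(|y|) y/|y|` (with `v(0)=0`). -/
noncomputable def radialField {n : ℕ} (g : ℝ → ℝ)
    (y : EuclideanSpace ℝ (Fin n)) : EuclideanSpace ℝ (Fin n) :=
  (g ‖y‖ / ‖y‖) • y

/-- The vector field `V(x) = ∫ v(x+y) dμ(y)`. -/
noncomputable def VField {n : ℕ} (g : ℝ → ℝ)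
    (μ : Measure (EuclideanSpace ℝ (Fin n)))
    (x : EuclideanSpace ℝ (Fin n)) : EuclideanSpace ℝ (Fin n) :=
  ∫ y, radialField g (x + y) ∂μ

open RealInnerProductSpace

lemma radialField_norm_le {n : ℕ} (g : ℝ → ℝ) (y : EuclideanSpace ℝ (Fin n)) :
    ‖radialField g y‖ ≤ |g ‖y‖| := by
  rcases eq_or_ne y 0 with rfl | h
  · simp [radialField]
  · have hy : ‖y‖ ≠ 0 := norm_ne_zero_iff.mpr h
    rw [radialField, norm_smul, Real.norm_eq_abs, abs_div, abs_norm,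
      div_mul_cancel₀ _ hy]

lemma radialField_continuous {n : ℕ} {g : ℝ → ℝ}
    (hg_cont : ContinuousOn g (Ici 0)) (hg0 : g 0 = 0) :
    Continuous (radialField g (n := n)) := by
  have hG : Continuous fun r : ℝ => g (max r 0) :=
    hg_cont.comp_continuous (continuous_id.max continuous_const)
      (fun x => mem_Ici.mpr (le_max_right _ _))
  have hrw : radialField g (n := n) = fun y => (g (max ‖y‖ 0) / ‖y‖) • y := by
    funext y
    simp [radialField, max_eq_left (norm_nonneg y)]
  rw [continuous_iff_continuousAt]
  intro x
  rcases eq_or_ne x 0 with rfl | hx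
  · rw [ContinuousAt]
    have h0 : radialField g (0 : EuclideanSpace ℝ (Fin n)) = 0 := by
      simp [radialField]
    rw [h0]
    refine squeeze_zero_norm (a := fun y : EuclideanSpace ℝ (Fin n) => |g (max ‖y‖ 0)|) (fun y => ?_) ?_
    · simpa [max_eq_left (norm_nonneg y)] using radialField_norm_le g y
    · have : Tendsto (fun y : EuclideanSpace ℝ (Fin n) => |g (max ‖y‖ 0)|)
          (nhds 0) (nhds |g (max ‖(0 : EuclideanSpace ℝ (Fin n))‖ 0)|) :=
        ((hG.comp continuous_norm).abs).tendsto 0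
      simpa [hg0] using this
  · rw [hrw]
    exact (((hG.comp continuous_norm).continuousAt.div
      continuous_norm.continuousAt (norm_ne_zero_iff.mpr hx)).smul continuousAt_id)

lemma radialField_strict_mono {n : ℕ} {g : ℝ → ℝ} (hg0 : g 0 = 0)
    (hg_mono : StrictMonoOn g (Ici 0))
    (a b : EuclideanSpace ℝ (Fin n)) (hab : a ≠ b) :
    0 < ⟪a - b, radialField g a - radialField g b⟫ := by
  set A := ‖a‖ with hA
  set B := ‖b‖ with hB
  set t := ⟪a, b⟫ with ht
  have hgnn : ∀ r : ℝ, 0 ≤ r → 0 ≤ g r := by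
    intro r hr
    rcases eq_or_lt_of_le hr with rfl | hr'
    · exact le_of_eq hg0.symm
    · exact (hg0 ▸ hg_mono (mem_Ici.mpr (le_refl 0)) hr hr').le
  have expand : ⟪a - b, radialField g a - radialField g b⟫
      = (g A / A) * (A ^ 2 - t) + (g B / B) * (B ^ 2 - t) := by
    simp only [radialField, inner_sub_left, inner_sub_right, real_inner_smul_right,
      real_inner_self_eq_norm_sq]
    have hc : (inner ℝ b a : ℝ) = t := real_inner_comm a b
    rw [hc]
    ring
  rw [expand]
  rcases eq_or_ne A B with hAB | hAB
  · -- same norm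
    rcases eq_or_ne A 0 with hA0 | hA0
    · exfalso
      apply hab
      have ha0 : a = 0 := norm_eq_zero.mp hA0
      have hb0 : b = 0 := norm_eq_zero.mp (by rw [← hB, ← hAB, hA0])
      rw [ha0, hb0]
    · have hApos : 0 < A := lt_of_le_of_ne (norm_nonneg a) (Ne.symm hA0)
      have hgApos : 0 < g A := hg0 ▸ hg_mono (mem_Ici.mpr (le_refl 0)) hApos.le hApos
      have hnsub : 0 < ‖a - b‖ := norm_sub_pos_iff.mpr hab
      have hsq : ‖a - b‖ ^ 2 = A ^ 2 - 2 * t + B ^ 2 := by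
        rw [norm_sub_sq_real]; try ring
      have hcoef : 0 < g A / A := div_pos hgApos hApos
      have : (g A / A) * (A ^ 2 - t) + (g B / B) * (B ^ 2 - t)
          = (g A / A) * ‖a - b‖ ^ 2 := by
        rw [hsq, ← hAB]; try ring
      rw [this]
      positivity
  · -- different norms
    have htle : t ≤ A * B := real_inner_le_norm a b
    have hca : 0 ≤ g A / A := div_nonneg (hgnn A (norm_nonneg a)) (norm_nonneg a)
    have hcb : 0 ≤ g B / B := div_nonneg (hgnn B (norm_nonneg b)) (norm_nonneg b)
    have e1 : g A / A * A = g A := by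
      rcases eq_or_ne A 0 with hA0 | hA0
      · simp [hA0, hg0]
      · exact div_mul_cancel₀ _ hA0
    have e2 : g B / B * B = g B := by
      rcases eq_or_ne B 0 with hB0 | hB0
      · simp [hB0, hg0]
      · exact div_mul_cancel₀ _ hB0
    have hs : 0 < (g A - g B) * (A - B) := by
      rcases lt_or_gt_of_ne hAB with h | h
      · have := hg_mono (norm_nonneg a) (norm_nonneg b) h
        exact mul_pos_of_neg_of_neg (by linarith) (by linarith)
      · have := hg_mono (norm_nonneg b) (norm_nonneg a) h
        exact mul_pos (by linarith) (by linarith)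
    have h1 : 0 ≤ (g A / A) * (A * B - t) := mul_nonneg hca (by linarith)
    have h2 : 0 ≤ (g B / B) * (A * B - t) := mul_nonneg hcb (by linarith)
    have hdecomp : (g A / A) * (A ^ 2 - t) + (g B / B) * (B ^ 2 - t)
        = g A * (A - B) + g B * (B - A) + (g A / A) * (A * B - t)
          + (g B / B) * (A * B - t) := by
      linear_combination (A - B) * e1 + (B - A) * e2
    rw [hdecomp]
    nlinarith [hs, h1, h2]

theorem center_of_mass_unique_strictMono_bounded {n : ℕ} (hn : 1 ≤ n)
    (g : ℝ → ℝ) (hg_cont : ContinuousOn g (Ici 0)) (hg0 : g 0 = 0)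
    (hg_mono : StrictMonoOn g (Ici 0))
    (hg_bdd : ∃ C : ℝ, ∀ r : ℝ, 0 ≤ r → |g r| ≤ C)
    (μ : Measure (EuclideanSpace ℝ (Fin n)))
    (hμpos : 0 < μ Set.univ) (hμfin : μ Set.univ < ⊤) :
    ∀ x₁ x₂ : EuclideanSpace ℝ (Fin n),
      VField g μ x₁ = 0 → VField g μ x₂ = 0 → x₁ = x₂ := by
  intro x₁ x₂ h₁ h₂
  by_contra hne
  have hfin : IsFiniteMeasure μ := ⟨hμfin⟩
  obtain ⟨C, hC⟩ := hg_bdd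
  have hcont := radialField_continuous (n := n) hg_cont hg0
  have hint : ∀ x : EuclideanSpace ℝ (Fin n),
      Integrable (fun y => radialField g (x + y)) μ := by
    intro x
    refine (integrable_const C).mono'
      ((hcont.comp (continuous_const.add continuous_id)).aestronglyMeasurable) ?_
    filter_upwards with y
    exact (radialField_norm_le g _).trans (hC _ (norm_nonneg _))
  set e := x₁ - x₂ with he_def
  have he : e ≠ 0 := sub_ne_zero.mpr hne
  have hsub : Integrable
      (fun y => radialField g (x₁ + y) - radialField g (x₂ + y)) μ :=
    (hint x₁).sub (hint x₂)
  have hI : ∫ y, ⟪e, radialField g (x₁ + y) - radialField g (x₂ + y)⟫ ∂μ = 0 := by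
    rw [integral_inner hsub, integral_sub (hint x₁) (hint x₂)]
    show ⟪e, VField g μ x₁ - VField g μ x₂⟫ = 0
    rw [h₁, h₂, sub_zero, inner_zero_right]
  have hpos : ∀ y, 0 < ⟪e, radialField g (x₁ + y) - radialField g (x₂ + y)⟫ := by
    intro y
    have hne' : x₁ + y ≠ x₂ + y := by
      intro h; exact hne (add_right_cancel h)
    have := radialField_strict_mono hg0 hg_mono (x₁ + y) (x₂ + y) hne'
    have hdiff : x₁ + y - (x₂ + y) = e := by rw [he_def]; abel
    rwa [hdiff] at this
  have hintf : Integrable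
      (fun y => ⟪e, radialField g (x₁ + y) - radialField g (x₂ + y)⟫) μ :=
    hsub.const_inner e
  have hlt : 0 < ∫ y, ⟪e, radialField g (x₁ + y) - radialField g (x₂ + y)⟫ ∂μ := by
    rw [integral_pos_iff_support_of_nonneg (fun y => (hpos y).le) hintf]
    have hsupp : Function.support
        (fun y => ⟪e, radialField g (x₁ + y) - radialField g (x₂ + y)⟫) = univ :=
      eq_univ_of_forall fun y => (hpos y).ne'
    rw [hsupp]
    exact hμpos
  rw [hI] at hlt
  exact lt_irrefl 0 hlt
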